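/- If G is a connected graph with n(G) ≥ 2 and k ≥ 2, then dim_ms(G ∘ \overline{K_k}) ≥ n(G)(k−1), where G ∘ \overline{K_k} is the lexicographic product of G with the edgeless graph on k vertices. -/

import Mathlib

open SimpleGraph

/-- The multiset representation of `u` with respect to `S`: the multiset of
distances from `u` to the vertices of `S`, counted with multiplicity. -/
noncomputable def mrep {V : Type*} (G : SimpleGraph V) (u : V) (S : Finset V) : Multiset ℕ :=
  S.val.map fun w => G.dist u w

/-- `S` is an outer multiset resolving set of `G`: the multiset representations of
the vertices outside `S` are pairwise distinct. -/
def IsOMR {V : Type*} (G : SimpleGraph V) (S : Finset V) : Prop :=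
  ∀ u ∉ S, ∀ v ∉ S, mrep G u S = mrep G v S → u = v

/-- The outer multiset dimension of `G`. -/
noncomputable def dimMS {V : Type*} (G : SimpleGraph V) [Fintype V] : ℕ :=
  sInf {n | ∃ S : Finset V, S.card = n ∧ IsOMR G S}

/-- The diameter of `G`: the largest distance between vertices of `G`. -/
noncomputable def gdiam {V : Type*} (G : SimpleGraph V) [Fintype V] : ℕ :=
  Finset.univ.sup fun p : V × V => G.dist p.1 p.2

/-- The lexicographic product of two simple graphs: `(g, h)` and `(gʹ, hʹ)` are adjacent
iff `g gʹ` is an edge of `G`, or `g = gʹ` and `h hʹ` is an edge of `H`. -/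
def lexProd {α β : Type*} (G : SimpleGraph α) (H : SimpleGraph β) : SimpleGraph (α × β) where
  Adj p q := G.Adj p.1 q.1 ∨ (p.1 = q.1 ∧ H.Adj p.2 q.2)
  symm := by
    constructor
    intro p q h
    rcases h with h | ⟨h1, h2⟩
    · exact Or.inl h.symm
    · exact Or.inr ⟨h1.symm, h2.symm⟩
  loopless := by
    constructor
    intro p h
    rcases h with h | ⟨_, h2⟩
    · exact G.loopless.irrefl _ h
    · exact H.loopless.irrefl _ h2


lemma lexProd_bot_adj {α β : Type*} (G : SimpleGraph α) (p q : α × β) :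
    (lexProd G (⊥ : SimpleGraph β)).Adj p q ↔ G.Adj p.1 q.1 := by
  simp [lexProd]

/-- Lift a walk of `G`, with endpoints distinct, to a walk of `lexProd G ⊥`
of at most the same length, with arbitrary second coordinates. -/
lemma lexProd_lift {α β : Type*} (G : SimpleGraph α) {a c : α} (W : G.Walk a c)
    (b d : β) (hne : a ≠ c) :
    ∃ P : (lexProd G (⊥ : SimpleGraph β)).Walk (a, b) (c, d), P.length ≤ W.length := by
  induction W generalizing b with
  | nil => exact absurd rfl hne
  | @cons a x c h W' ih =>
    by_cases hxc : x = c
    · subst hxc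
      exact ⟨SimpleGraph.Walk.cons ((lexProd_bot_adj G (a, b) (x, d)).mpr h)
        SimpleGraph.Walk.nil, by simp⟩
    · obtain ⟨P', hP'⟩ := ih d hxc
      refine ⟨SimpleGraph.Walk.cons ((lexProd_bot_adj G (a, b) (x, d)).mpr h) P', ?_⟩
      simpa using hP'

/-- The first-projection graph homomorphism. -/
def lexProdFst {α β : Type*} (G : SimpleGraph α) :
    lexProd G (⊥ : SimpleGraph β) →g G where
  toFun := Prod.fst
  map_rel' := fun h => (lexProd_bot_adj G _ _).mp h

lemma lexProd_dist_of_fst_ne {α β : Type*} (G : SimpleGraph α) (hconn : G.Connected)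
    {a c : α} (b d : β) (hne : a ≠ c) :
    (lexProd G (⊥ : SimpleGraph β)).dist (a, b) (c, d) = G.dist a c := by
  obtain ⟨W, hW⟩ := hconn.exists_walk_length_eq_dist a c
  obtain ⟨P, hP⟩ := lexProd_lift G W b d hne
  apply le_antisymm
  · exact le_trans (SimpleGraph.dist_le P) (hW ▸ hP)
  · have hr : (lexProd G (⊥ : SimpleGraph β)).Reachable (a, b) (c, d) := ⟨P⟩
    obtain ⟨Q, hQ⟩ := hr.exists_walk_length_eq_dist
    calc G.dist a c ≤ (Q.map (lexProdFst G)).length := SimpleGraph.dist_le _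
      _ = Q.length := Q.length_map _
      _ = _ := hQ

lemma lexProd_dist_fiber {α β : Type*} [Fintype α] (G : SimpleGraph α) (hconn : G.Connected)
    (hcard : 2 ≤ Fintype.card α)
    {a : α} {b d : β} (hne : b ≠ d) :
    (lexProd G (⊥ : SimpleGraph β)).dist (a, b) (a, d) = 2 := by
  -- a has a neighbor
  obtain ⟨c, hc⟩ := Fintype.exists_ne_of_one_lt_card hcard a
  obtain ⟨W⟩ := hconn a c
  have hnn : ¬ W.Nil := SimpleGraph.Walk.not_nil_of_ne (Ne.symm hc)
  have hadj : G.Adj a (W.getVert 1) := SimpleGraph.Walk.adj_snd hnn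
  set a' := W.getVert 1
  have e1 : (lexProd G (⊥ : SimpleGraph β)).Adj (a, b) (a', b) :=
    (lexProd_bot_adj G _ _).mpr hadj
  have e2 : (lexProd G (⊥ : SimpleGraph β)).Adj (a', b) (a, d) :=
    (lexProd_bot_adj G _ _).mpr hadj.symm
  have hle : (lexProd G (⊥ : SimpleGraph β)).dist (a, b) (a, d) ≤ 2 := by
    have := SimpleGraph.dist_le
      (SimpleGraph.Walk.cons e1 (SimpleGraph.Walk.cons e2 SimpleGraph.Walk.nil))
    simpa using this
  have hr : (lexProd G (⊥ : SimpleGraph β)).Reachable (a, b) (a, d) :=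
    ⟨SimpleGraph.Walk.cons e1 (SimpleGraph.Walk.cons e2 SimpleGraph.Walk.nil)⟩
  have h0 : (lexProd G (⊥ : SimpleGraph β)).dist (a, b) (a, d) ≠ 0 := by
    rw [SimpleGraph.dist_ne_zero_iff_ne_and_reachable]
    exact ⟨by simp [hne], hr⟩
  have h1 : (lexProd G (⊥ : SimpleGraph β)).dist (a, b) (a, d) ≠ 1 := by
    rw [Ne, SimpleGraph.dist_eq_one_iff_adj, lexProd_bot_adj]
    exact G.loopless.irrefl a
  omega

theorem stmt_12 (V : Type*) [Fintype V] (G : SimpleGraph V)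
    (hconn : G.Connected) (hn : 2 ≤ Fintype.card V) (k : ℕ) (hk : 2 ≤ k) :
    Fintype.card V * (k - 1) ≤ dimMS (lexProd G (⊥ : SimpleGraph (Fin k))) := by
  classical
  set H := lexProd G (⊥ : SimpleGraph (Fin k)) with hH
  have hne : {n | ∃ S : Finset (V × Fin k), S.card = n ∧ IsOMR H S}.Nonempty := by
    refine ⟨(Finset.univ : Finset (V × Fin k)).card, Finset.univ, rfl, ?_⟩
    intro u hu
    exact absurd (Finset.mem_univ u) hu
  apply le_csInf hne
  rintro n ⟨S, rfl, hS⟩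
  by_contra hlt
  push_neg at hlt
  -- pigeonhole: two vertices outside S in the same fiber
  have hcardc : Fintype.card V < Sᶜ.card := by
    have h1 : Sᶜ.card = Fintype.card (V × Fin k) - S.card := by
      rw [Finset.card_compl]
    have h2 : Fintype.card (V × Fin k) = Fintype.card V * k := by
      simp [Fintype.card_prod]
    have hk1 : Fintype.card V * k = Fintype.card V * (k - 1) + Fintype.card V := by
      have h : k = (k - 1) + 1 := by omega
      calc Fintype.card V * k = Fintype.card V * ((k-1) + 1) := by rw [← h]
        _ = Fintype.card V * (k - 1) + Fintype.card V := by ring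
    omega
  have hmaps : ∀ x ∈ Sᶜ, x.1 ∈ (Finset.univ : Finset V) := fun _ _ => Finset.mem_univ _
  obtain ⟨u, hu, v, hv, huv, hfst⟩ :=
    Finset.exists_ne_map_eq_of_card_lt_of_maps_to (by simpa using hcardc) hmaps
  rw [Finset.mem_compl] at hu hv
  apply huv
  apply hS u hu v hv
  unfold mrep
  apply Multiset.map_congr rfl
  intro w hw
  have hwS : w ∈ S := hw
  have hwu : w ≠ u := fun h => hu (h ▸ hwS)
  have hwv : w ≠ v := fun h => hv (h ▸ hwS)
  by_cases hw1 : w.1 = u.1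
  · -- w in the same fiber as u and v: both distances are 2
    have h2u : u.2 ≠ w.2 := by
      intro h
      exact hwu (Prod.ext hw1 h.symm)
    have h2v : v.2 ≠ w.2 := by
      intro h
      exact hwv (Prod.ext (hfst ▸ hw1) h.symm)
    have du : H.dist u w = 2 := by
      have := lexProd_dist_fiber G hconn hn (β := Fin k) (a := u.1) h2u
      rw [hH]
      convert this using 2 <;> simp [hw1.symm]
    have dv : H.dist v w = 2 := by
      have := lexProd_dist_fiber G hconn hn (β := Fin k) (a := v.1) h2v
      rw [hH]
      convert this using 2 <;> simp [hfst ▸ hw1.symm, ← hfst, hw1.symm]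
    rw [du, dv]
  · -- different fibers: distance equals G.dist on first coordinates
    have du : H.dist u w = G.dist u.1 w.1 := by
      have := lexProd_dist_of_fst_ne G hconn (a := u.1) (c := w.1) u.2 w.2
        (fun h => hw1 h.symm)
      simpa using this
    have dv : H.dist v w = G.dist v.1 w.1 := by
      have := lexProd_dist_of_fst_ne G hconn (a := v.1) (c := w.1) v.2 w.2
        (fun h => hw1 (hfst ▸ h.symm))
      simpa using this
    rw [du, dv, hfst]
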